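/- (Cone Invariance Property.) Let z₁, z₂ ∈ Z with z₁ ≠ z₂, and set u(t) := x(t, z₁) − x(t, z₂) and v(t) := y(t, z₁) − y(t, z₂). Then one of the following holds: (i) ‖v(t)‖ < ‖u(t)‖ for all t ∈ ℝ; (ii) ‖v(t)‖ > ‖u(t)‖ for all t ∈ ℝ; (iii) there exists t₀ ∈ ℝ such that ‖v(t)‖ < ‖u(t)‖ for all t < t₀, ‖v(t₀)‖ = ‖u(t₀)‖, and ‖v(t)‖ > ‖u(t)‖ for all t > t₀. -/

import Mathlib

open MeasureTheory

noncomputable section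


open MeasureTheory intervalIntegral Set

/-- Forward integral Grönwall inequality. -/
theorem my_gronwall_integral {a b K c₀ : ℝ} (hK : 0 ≤ K) {ψ : ℝ → ℝ}
    (hcont : Continuous ψ)
    (hI : ∀ t ∈ Set.Icc a b, ψ t ≤ c₀ + K * ∫ r in a..t, ψ r) :
    ∀ t ∈ Set.Icc a b, ψ t ≤ c₀ * Real.exp (K * (t - a)) := by
  intro t ht
  set Ψ : ℝ → ℝ := fun x => ∫ r in a..x, ψ r with hΨdef
  have hΨ : ∀ x : ℝ, HasDerivAt Ψ (ψ x) x := fun x =>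
    (hcont.integral_hasStrictDerivAt a x).hasDerivAt
  set g : ℝ → ℝ := fun x => Real.exp (-(K * x)) * (K * Ψ x + c₀) with hgdef
  have hg' : ∀ x : ℝ, HasDerivAt g
      (Real.exp (-(K * x)) * (-K) * (K * Ψ x + c₀) + Real.exp (-(K * x)) * (K * ψ x)) x := by
    intro x
    have h1 : HasDerivAt (fun y : ℝ => -(K * y)) (-K) x := by
      simpa using ((hasDerivAt_id x).const_mul K).fun_neg
    have h2 : HasDerivAt (fun y : ℝ => Real.exp (-(K * y))) (Real.exp (-(K * x)) * (-K)) x :=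
      h1.exp
    have h3 : HasDerivAt (fun y : ℝ => K * Ψ y + c₀) (K * ψ x) x :=
      ((hΨ x).const_mul K).add_const c₀
    exact h2.mul h3
  have hanti : AntitoneOn g (Set.Icc a b) := by
    apply antitoneOn_of_deriv_nonpos (convex_Icc a b)
    · exact (Continuous.mul (by continuity)
        (((continuous_const.mul (by
          exact (intervalIntegral.continuous_primitive (fun _ _ => hcont.intervalIntegrable _ _) a))).add
          continuous_const))).continuousOn
    · intro x _
      exact ((hg' x).differentiableAt).differentiableWithinAt
    · intro x hx
      rw [interior_Icc] at hx
      rw [(hg' x).deriv]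
      have hIx := hI x ⟨le_of_lt hx.1, le_of_lt hx.2⟩
      have he : (0:ℝ) < Real.exp (-(K * x)) := Real.exp_pos _
      nlinarith [mul_nonneg hK (sub_nonneg.mpr hIx)]
  have hga : g t ≤ g a := hanti (Set.left_mem_Icc.mpr (le_trans ht.1 ht.2)) ht ht.1
  have hΨa : Ψ a = 0 := intervalIntegral.integral_same
  have hIt : ψ t ≤ c₀ + K * Ψ t := hI t ht
  have hkey : K * Ψ t + c₀ ≤ c₀ * Real.exp (K * (t - a)) := by
    have := mul_le_mul_of_nonneg_right hga (le_of_lt (Real.exp_pos (K * t)))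
    have e1 : Real.exp (-(K * t)) * Real.exp (K * t) = 1 := by
      rw [← Real.exp_add]; simp
    have e2 : Real.exp (-(K * a)) * Real.exp (K * t) = Real.exp (K * (t - a)) := by
      rw [← Real.exp_add]; ring_nf
    rw [hgdef] at this
    simp only [hΨa, mul_zero, zero_add] at this
    have l1 : Real.exp (-(K*t)) * (K * Ψ t + c₀) * Real.exp (K*t) = K * Ψ t + c₀ := by
      rw [mul_comm (Real.exp (-(K*t))) _, mul_assoc, e1, mul_one]
    have l2 : Real.exp (-(K*a)) * c₀ * Real.exp (K*t) = c₀ * Real.exp (K*(t-a)) := by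
      rw [mul_comm (Real.exp (-(K*a))) c₀, mul_assoc, e2]
    linarith
  linarith
open MeasureTheory intervalIntegral Set in
/-- Backward integral Grönwall inequality. -/
theorem my_gronwall_integral_back {a b K c₀ : ℝ} (hK : 0 ≤ K) {ψ : ℝ → ℝ}
    (hcont : Continuous ψ)
    (hI : ∀ r ∈ Set.Icc a b, ψ r ≤ c₀ + K * ∫ ρ in r..b, ψ ρ) :
    ∀ r ∈ Set.Icc a b, ψ r ≤ c₀ * Real.exp (K * (b - r)) := by
  intro r hr
  set χ : ℝ → ℝ := fun x => ψ (a + b - x) with hχ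
  have hχc : Continuous χ := hcont.comp (by continuity)
  have hI' : ∀ x ∈ Set.Icc a b, χ x ≤ c₀ + K * ∫ s in a..x, χ s := by
    intro x hx
    have hmem : a + b - x ∈ Set.Icc a b := ⟨by linarith [hx.2], by linarith [hx.1]⟩
    have h2 := hI _ hmem
    have hint : (∫ s in a..x, χ s) = ∫ ρ in (a+b-x)..b, ψ ρ := by
      have h3 := intervalIntegral.integral_comp_sub_left (a := a) (b := x) ψ (a + b)
      simpa [hχ, show a + b - a = b by ring] using h3
    rw [hint]; exact h2
  have h4 := my_gronwall_integral hK hχc hI' (a + b - r) ⟨by linarith [hr.2], by linarith [hr.1]⟩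
  simpa [hχ, show a + b - (a + b - r) = r by ring, show a + b - r - a = b - r by ring] using h4
open MeasureTheory intervalIntegral Set in
/-- Variation of constants / mild solution formula. -/
theorem my_mild_formula {E : Type*} [NormedAddCommGroup E] [NormedSpace ℝ E] [CompleteSpace E]
    (T : E →L[ℝ] E) {p f : ℝ → E} (hf : Continuous f)
    (hp : ∀ τ : ℝ, HasDerivAt p (T (p τ) + f τ) τ) (s t : ℝ) :
    p t = NormedSpace.exp ((t - s) • T) (p s)
      + ∫ r in s..t, NormedSpace.exp ((t - r) • T) (f r) := by
  have hexp_cont : Continuous fun ρ : ℝ => NormedSpace.exp ((t - ρ) • T) :=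
    (continuous_iff_continuousAt.mpr fun x => (NormedSpace.exp_analytic (𝕂 := ℝ) x).continuousAt).comp ((continuous_const.sub continuous_id).smul continuous_const)
  have hq : ∀ ρ : ℝ, HasDerivAt (fun ρ => NormedSpace.exp ((t - ρ) • T) (p ρ))
      (NormedSpace.exp ((t - ρ) • T) (f ρ)) ρ := by
    intro ρ
    have hinner : HasDerivAt (fun ρ : ℝ => t - ρ) (-1) ρ := by
      simpa using (hasDerivAt_id ρ).const_sub t
    have houter := hasDerivAt_exp_smul_const (𝕂 := ℝ) T (t - ρ)
    have hE : HasDerivAt (fun ρ : ℝ => NormedSpace.exp ((t - ρ) • T))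
        ((-1 : ℝ) • (NormedSpace.exp ((t - ρ) • T) * T)) ρ :=
      houter.scomp ρ hinner
    have := hE.clm_apply (hp ρ)
    convert this using 1
    simp only [neg_one_smul, ContinuousLinearMap.neg_apply, ContinuousLinearMap.mul_apply,
      map_add]
    abel
  have hicont : Continuous fun ρ : ℝ => NormedSpace.exp ((t - ρ) • T) (f ρ) :=
    hexp_cont.clm_apply hf
  have hFTC := intervalIntegral.integral_eq_sub_of_hasDerivAt
    (f := fun ρ => NormedSpace.exp ((t - ρ) • T) (p ρ))
    (fun ρ _ => hq ρ) (hicont.intervalIntegrable s t)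
  have h0 : NormedSpace.exp ((t - t) • T) = 1 := by
    rw [sub_self, zero_smul, NormedSpace.exp_zero]
  simp only [h0, ContinuousLinearMap.one_apply] at hFTC
  rw [hFTC]
  abel
open MeasureTheory intervalIntegral Set in
/-- Forward norm estimate from the mild solution formula. -/
theorem my_est_forward {E : Type*} [NormedAddCommGroup E] [NormedSpace ℝ E] [CompleteSpace E]
    (T : E →L[ℝ] E) {θ : ℝ} (hT : ∀ x : ℝ, 0 ≤ x → ‖NormedSpace.exp (x • T)‖ ≤ Real.exp (θ * x))
    {p f : ℝ → E} (hf : Continuous f)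
    (hp : ∀ τ : ℝ, HasDerivAt p (T (p τ) + f τ) τ)
    {φ : ℝ → ℝ} (hφ : Continuous φ) (hfb : ∀ r : ℝ, ‖f r‖ ≤ φ r)
    {s t : ℝ} (hst : s ≤ t) :
    ‖p t‖ ≤ Real.exp (θ * (t - s)) * ‖p s‖ + ∫ r in s..t, Real.exp (θ * (t - r)) * φ r := by
  rw [my_mild_formula T hf hp s t]
  have hicont : Continuous fun ρ : ℝ => NormedSpace.exp ((t - ρ) • T) (f ρ) :=
    ((continuous_iff_continuousAt.mpr fun x => (NormedSpace.exp_analytic (𝕂 := ℝ) x).continuousAt).comp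
      ((continuous_const.sub continuous_id).smul continuous_const)).clm_apply hf
  calc ‖NormedSpace.exp ((t - s) • T) (p s) + ∫ r in s..t, NormedSpace.exp ((t - r) • T) (f r)‖
      ≤ ‖NormedSpace.exp ((t - s) • T) (p s)‖
        + ‖∫ r in s..t, NormedSpace.exp ((t - r) • T) (f r)‖ := norm_add_le _ _
    _ ≤ Real.exp (θ * (t - s)) * ‖p s‖ + ∫ r in s..t, Real.exp (θ * (t - r)) * φ r := by
        gcongr
        · exact le_trans ((NormedSpace.exp ((t - s) • T)).le_opNorm (p s))
            (mul_le_mul_of_nonneg_right (hT (t - s) (by linarith)) (norm_nonneg _))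
        · calc ‖∫ r in s..t, NormedSpace.exp ((t - r) • T) (f r)‖
              ≤ ∫ r in s..t, ‖NormedSpace.exp ((t - r) • T) (f r)‖ :=
                intervalIntegral.norm_integral_le_integral_norm hst
            _ ≤ ∫ r in s..t, Real.exp (θ * (t - r)) * φ r := by
                have hg : Continuous fun r : ℝ => Real.exp (θ * (t - r)) * φ r :=
                  (Real.continuous_exp.comp (by continuity)).mul hφ
                apply intervalIntegral.integral_mono_on hst
                  (hicont.norm.intervalIntegrable s t) (hg.intervalIntegrable s t)
                intro r hr
                refine le_trans ((NormedSpace.exp ((t - r) • T)).le_opNorm (f r)) ?_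
                have h1 := hT (t - r) (by linarith [hr.2])
                have h2 := hfb r
                have h3 : (0:ℝ) ≤ φ r := le_trans (norm_nonneg _) h2
                nlinarith [norm_nonneg (f r), (NormedSpace.exp ((t - r) • T)).opNorm_nonneg]

open MeasureTheory intervalIntegral Set in
/-- Backward norm estimate from the mild solution formula. -/
theorem my_est_backward {E : Type*} [NormedAddCommGroup E] [NormedSpace ℝ E] [CompleteSpace E]
    (T : E →L[ℝ] E) {θ : ℝ}
    (hT : ∀ x : ℝ, 0 ≤ x → ‖NormedSpace.exp ((-x) • T)‖ ≤ Real.exp (-(θ * x)))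
    {p f : ℝ → E} (hf : Continuous f)
    (hp : ∀ τ : ℝ, HasDerivAt p (T (p τ) + f τ) τ)
    {φ : ℝ → ℝ} (hφ : Continuous φ) (hfb : ∀ r : ℝ, ‖f r‖ ≤ φ r)
    {r t : ℝ} (hrt : r ≤ t) :
    ‖p r‖ ≤ Real.exp (-(θ * (t - r))) * ‖p t‖ + ∫ ρ in r..t, Real.exp (-(θ * (ρ - r))) * φ ρ := by
  rw [my_mild_formula T hf hp t r]
  rw [intervalIntegral.integral_symm]
  have hicont : Continuous fun ρ : ℝ => NormedSpace.exp ((r - ρ) • T) (f ρ) :=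
    ((continuous_iff_continuousAt.mpr fun x => (NormedSpace.exp_analytic (𝕂 := ℝ) x).continuousAt).comp
      ((continuous_const.sub continuous_id).smul continuous_const)).clm_apply hf
  calc ‖NormedSpace.exp ((r - t) • T) (p t) + -∫ ρ in r..t, NormedSpace.exp ((r - ρ) • T) (f ρ)‖
      ≤ ‖NormedSpace.exp ((r - t) • T) (p t)‖
        + ‖∫ ρ in r..t, NormedSpace.exp ((r - ρ) • T) (f ρ)‖ := by
        refine le_trans (norm_add_le _ _) ?_
        rw [norm_neg]
    _ ≤ Real.exp (-(θ * (t - r))) * ‖p t‖ + ∫ ρ in r..t, Real.exp (-(θ * (ρ - r))) * φ ρ := by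
        gcongr
        · have := hT (t - r) (by linarith)
          rw [show (-(t - r)) • T = (r - t) • T by rw [neg_sub]] at this
          exact le_trans ((NormedSpace.exp ((r - t) • T)).le_opNorm (p t))
            (mul_le_mul_of_nonneg_right this (norm_nonneg _))
        · calc ‖∫ ρ in r..t, NormedSpace.exp ((r - ρ) • T) (f ρ)‖
              ≤ ∫ ρ in r..t, ‖NormedSpace.exp ((r - ρ) • T) (f ρ)‖ :=
                intervalIntegral.norm_integral_le_integral_norm hrt
            _ ≤ ∫ ρ in r..t, Real.exp (-(θ * (ρ - r))) * φ ρ := by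
                have hg : Continuous fun ρ : ℝ => Real.exp (-(θ * (ρ - r))) * φ ρ :=
                  (Real.continuous_exp.comp (by continuity)).mul hφ
                apply intervalIntegral.integral_mono_on hrt
                  (hicont.norm.intervalIntegrable r t) (hg.intervalIntegrable r t)
                intro ρ hρ
                refine le_trans ((NormedSpace.exp ((r - ρ) • T)).le_opNorm (f ρ)) ?_
                have h1 := hT (ρ - r) (by linarith [hρ.1])
                rw [show (-(ρ - r)) • T = (r - ρ) • T by rw [neg_sub]] at h1
                have h2 := hfb ρ
                have h3 : (0:ℝ) ≤ φ ρ := le_trans (norm_nonneg _) h2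
                nlinarith [norm_nonneg (f ρ), (NormedSpace.exp ((r - ρ) • T)).opNorm_nonneg]
open MeasureTheory intervalIntegral Set in
theorem my_exp_integral {γ : ℝ} (hγ : γ ≠ 0) (τ : ℝ) :
    (∫ x in (0:ℝ)..τ, Real.exp (-(γ * x))) = (1 - Real.exp (-(γ * τ))) / γ := by
  have h := intervalIntegral.integral_comp_mul_left (a := (0:ℝ)) (b := τ) Real.exp
    (neg_ne_zero.mpr hγ)
  simp only [neg_mul, mul_zero, integral_exp, Real.exp_zero, smul_eq_mul] at h
  rw [h, eq_div_iff hγ, inv_neg]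
  field_simp
  ring

open MeasureTheory intervalIntegral Set in
theorem my_int1 {γ : ℝ} (hγ : γ ≠ 0) (s t : ℝ) :
    (∫ r in s..t, Real.exp (-(γ * (t - r)))) = (1 - Real.exp (-(γ * (t - s)))) / γ := by
  have h := intervalIntegral.integral_comp_sub_left (a := s) (b := t)
    (fun x => Real.exp (-(γ * x))) t
  simp only [sub_self] at h
  rw [h, my_exp_integral hγ]

open MeasureTheory intervalIntegral Set in
theorem my_int2 {γ : ℝ} (hγ : γ ≠ 0) (s t : ℝ) :
    (∫ r in s..t, Real.exp (-(γ * (r - s)))) = (1 - Real.exp (-(γ * (t - s)))) / γ := by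
  have h := intervalIntegral.integral_comp_sub_right (a := s) (b := t)
    (fun x => Real.exp (-(γ * x))) s
  simp only [sub_self] at h
  rw [h, my_exp_integral hγ]

set_option maxHeartbeats 2000000 in
open MeasureTheory intervalIntegral Set in
/-- **Cone Invariance Property.** -/
theorem cone_invariance_property
    {X Y : Type*} [NormedAddCommGroup X] [NormedSpace ℝ X] [CompleteSpace X]
    [NormedAddCommGroup Y] [NormedSpace ℝ Y] [CompleteSpace Y]
    (A : X →L[ℝ] X) (B : Y →L[ℝ] Y) (α β δ : ℝ)
    (F : X × Y → X) (G : X × Y → Y)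
    (z : ℝ → X × Y → X × Y)
    (hA : ∀ t : ℝ, 0 ≤ t → ‖NormedSpace.exp (t • A)‖ ≤ Real.exp (α * t))
    (hB : ∀ t : ℝ, 0 ≤ t → ‖NormedSpace.exp ((-t) • B)‖ ≤ Real.exp (-(β * t)))
    (hδ : 0 ≤ δ)
    (hLip : ∀ w₁ w₂ : X × Y, ‖((F w₁, G w₁) : X × Y) - (F w₂, G w₂)‖ ≤ δ * ‖w₁ - w₂‖)
    (hH0 : ((F 0, G 0) : X × Y) = 0)
    (hgap : 2 * δ < β - α)
    (hz0 : ∀ w : X × Y, z 0 w = w)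
    (hode : ∀ (w : X × Y) (t : ℝ),
      HasDerivAt (fun τ => z τ w)
        (((A (z t w).1, B (z t w).2) : X × Y) + (F (z t w), G (z t w))) t)
    (z₁ z₂ : X × Y) (hne : z₁ ≠ z₂) :
    (∀ t : ℝ, ‖(z t z₁).2 - (z t z₂).2‖ < ‖(z t z₁).1 - (z t z₂).1‖) ∨
    (∀ t : ℝ, ‖(z t z₁).1 - (z t z₂).1‖ < ‖(z t z₁).2 - (z t z₂).2‖) ∨
    (∃ t₀ : ℝ,
      (∀ t : ℝ, t < t₀ → ‖(z t z₁).2 - (z t z₂).2‖ < ‖(z t z₁).1 - (z t z₂).1‖) ∧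
      ‖(z t₀ z₁).2 - (z t₀ z₂).2‖ = ‖(z t₀ z₁).1 - (z t₀ z₂).1‖ ∧
      (∀ t : ℝ, t₀ < t → ‖(z t z₁).1 - (z t z₂).1‖ < ‖(z t z₁).2 - (z t z₂).2‖)) := by
  classical
  have hz1c : Continuous fun τ => z τ z₁ :=
    continuous_iff_continuousAt.mpr fun t => (hode z₁ t).continuousAt
  have hz2c : Continuous fun τ => z τ z₂ :=
    continuous_iff_continuousAt.mpr fun t => (hode z₂ t).continuousAt
  have hFlip : ∀ a b : X × Y, ‖F a - F b‖ ≤ δ * ‖a - b‖ := by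
    intro a b
    have h1 := hLip a b
    have h2 : ‖F a - F b‖ ≤ ‖((F a, G a) : X × Y) - (F b, G b)‖ := by
      rw [Prod.mk_sub_mk]; exact norm_fst_le (⟨F a - F b, G a - G b⟩ : X × Y)
    linarith
  have hGlip : ∀ a b : X × Y, ‖G a - G b‖ ≤ δ * ‖a - b‖ := by
    intro a b
    have h1 := hLip a b
    have h2 : ‖G a - G b‖ ≤ ‖((F a, G a) : X × Y) - (F b, G b)‖ := by
      rw [Prod.mk_sub_mk]; exact norm_snd_le (⟨F a - F b, G a - G b⟩ : X × Y)
    linarith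
  have hFc : Continuous F :=
    (LipschitzWith.of_dist_le_mul (K := ⟨δ, hδ⟩) fun a b => by
      rw [dist_eq_norm, dist_eq_norm]; exact hFlip a b).continuous
  have hGc : Continuous G :=
    (LipschitzWith.of_dist_le_mul (K := ⟨δ, hδ⟩) fun a b => by
      rw [dist_eq_norm, dist_eq_norm]; exact hGlip a b).continuous
  set u : ℝ → X := fun τ => (z τ z₁).1 - (z τ z₂).1 with hu_def
  set v : ℝ → Y := fun τ => (z τ z₁).2 - (z τ z₂).2 with hv_def
  set m : ℝ → ℝ := fun τ => max ‖u τ‖ ‖v τ‖ with hm_def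
  have hu_c : Continuous u := (continuous_fst.comp hz1c).sub (continuous_fst.comp hz2c)
  have hv_c : Continuous v := (continuous_snd.comp hz1c).sub (continuous_snd.comp hz2c)
  have hm_c : Continuous m := hu_c.norm.max hv_c.norm
  have hm_eq : ∀ r : ℝ, ‖z r z₁ - z r z₂‖ = m r := by
    intro r; rw [Prod.norm_def]; rfl
  have hu' : ∀ τ : ℝ, HasDerivAt u (A (u τ) + (F (z τ z₁) - F (z τ z₂))) τ := by
    intro τ
    have h1 : HasDerivAt (fun τ => (z τ z₁).1) (A (z τ z₁).1 + F (z τ z₁)) τ := by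
      simpa [Function.comp_def] using (ContinuousLinearMap.fst ℝ X Y).hasFDerivAt.comp_hasDerivAt τ (hode z₁ τ)
    have h2 : HasDerivAt (fun τ => (z τ z₂).1) (A (z τ z₂).1 + F (z τ z₂)) τ := by
      simpa [Function.comp_def] using (ContinuousLinearMap.fst ℝ X Y).hasFDerivAt.comp_hasDerivAt τ (hode z₂ τ)
    have h3 := h1.fun_sub h2
    convert h3 using 1
    simp only [hu_def, map_sub]
    abel
  have hv' : ∀ τ : ℝ, HasDerivAt v (B (v τ) + (G (z τ z₁) - G (z τ z₂))) τ := by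
    intro τ
    have h1 : HasDerivAt (fun τ => (z τ z₁).2) (B (z τ z₁).2 + G (z τ z₁)) τ := by
      simpa [Function.comp_def] using (ContinuousLinearMap.snd ℝ X Y).hasFDerivAt.comp_hasDerivAt τ (hode z₁ τ)
    have h2 : HasDerivAt (fun τ => (z τ z₂).2) (B (z τ z₂).2 + G (z τ z₂)) τ := by
      simpa [Function.comp_def] using (ContinuousLinearMap.snd ℝ X Y).hasFDerivAt.comp_hasDerivAt τ (hode z₂ τ)
    have h3 := h1.fun_sub h2
    convert h3 using 1
    simp only [hv_def, map_sub]
    abel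
  have hfFc : Continuous fun τ => F (z τ z₁) - F (z τ z₂) := (hFc.comp hz1c).sub (hFc.comp hz2c)
  have hfGc : Continuous fun τ => G (z τ z₁) - G (z τ z₂) := (hGc.comp hz1c).sub (hGc.comp hz2c)
  have hfFb : ∀ r : ℝ, ‖F (z r z₁) - F (z r z₂)‖ ≤ δ * m r := fun r =>
    (hFlip _ _).trans (le_of_eq (by rw [hm_eq r]))
  have hfGb : ∀ r : ℝ, ‖G (z r z₁) - G (z r z₂)‖ ≤ δ * m r := fun r =>
    (hGlip _ _).trans (le_of_eq (by rw [hm_eq r]))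
  have hφc : Continuous fun r : ℝ => δ * m r := continuous_const.mul hm_c
  have estA : ∀ s t : ℝ, s ≤ t → ‖u t‖ ≤ Real.exp (α * (t - s)) * ‖u s‖
      + ∫ r in s..t, Real.exp (α * (t - r)) * (δ * m r) := fun s t hst =>
    my_est_forward A hA hfFc hu' hφc hfFb hst
  have estB : ∀ r t : ℝ, r ≤ t → ‖v r‖ ≤ Real.exp (-(β * (t - r))) * ‖v t‖
      + ∫ ρ in r..t, Real.exp (-(β * (ρ - r))) * (δ * m ρ) := fun r t hrt =>
    my_est_backward B hB hfGc hv' hφc hfGb hrt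
  -- the spectral gap constant
  set γ : ℝ := β - α - δ with hγ_def
  have hγδ : δ < γ := by simp only [hγ_def]; linarith
  have hγ0 : 0 < γ := lt_of_le_of_lt hδ hγδ
  -- nonvanishing of the difference
  have hm_pos : ∀ t : ℝ, 0 < m t := by
    intro t
    rcases lt_or_ge 0 (m t) with h | hc
    · exact h
    exfalso
    have hz_eq : z t z₁ = z t z₂ := by
      have h0 : ‖z t z₁ - z t z₂‖ = 0 := le_antisymm (by rw [hm_eq t]; exact hc) (norm_nonneg _)
      exact sub_eq_zero.mp (norm_eq_zero.mp h0)
    set V : X × Y → X × Y := fun p => ((A p.1, B p.2) : X × Y) + (F p, G p) with hV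
    have hVlip : LipschitzWith (Real.toNNReal (max ‖A‖ ‖B‖ + δ)) V := by
      apply LipschitzWith.of_dist_le_mul
      intro p q
      rw [dist_eq_norm, dist_eq_norm,
        Real.coe_toNNReal _ (add_nonneg (le_trans (norm_nonneg A) (le_max_left _ _)) hδ)]
      have h1 : V p - V q = ((A (p.1 - q.1), B (p.2 - q.2)) : X × Y)
          + ((F p - F q, G p - G q) : X × Y) := by
        simp only [hV, Prod.mk_sub_mk, map_sub, Prod.mk_add_mk, Prod.ext_iff,
          Prod.fst_sub, Prod.snd_sub, Prod.fst_add, Prod.snd_add]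
        constructor <;> abel
      rw [h1]
      have h2 : ‖((A (p.1 - q.1), B (p.2 - q.2)) : X × Y)‖ ≤ max ‖A‖ ‖B‖ * ‖p - q‖ := by
        rw [Prod.norm_def]
        apply max_le
        · exact le_trans (A.le_opNorm _) (mul_le_mul (le_max_left _ _)
            (by rw [← Prod.fst_sub]; exact norm_fst_le _) (norm_nonneg _)
            (le_trans (norm_nonneg A) (le_max_left _ _)))
        · exact le_trans (B.le_opNorm _) (mul_le_mul (le_max_right _ _)
            (by rw [← Prod.snd_sub]; exact norm_snd_le _) (norm_nonneg _)
            (le_trans (norm_nonneg B) (le_max_right _ _)))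
      have h3 : ‖((F p - F q, G p - G q) : X × Y)‖ ≤ δ * ‖p - q‖ := by
        rw [← Prod.mk_sub_mk]; exact hLip p q
      calc ‖((A (p.1 - q.1), B (p.2 - q.2)) : X × Y) + ((F p - F q, G p - G q) : X × Y)‖
          ≤ ‖((A (p.1 - q.1), B (p.2 - q.2)) : X × Y)‖ + ‖((F p - F q, G p - G q) : X × Y)‖ :=
            norm_add_le _ _
        _ ≤ max ‖A‖ ‖B‖ * ‖p - q‖ + δ * ‖p - q‖ := add_le_add h2 h3
        _ = (max ‖A‖ ‖B‖ + δ) * ‖p - q‖ := by ring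
    have hmem : t ∈ Set.Ioo (min t 0 - 1) (max t 0 + 1) :=
      ⟨by have := min_le_left t 0; linarith, by have := le_max_left t 0; linarith⟩
    have heq := ODE_solution_unique_of_mem_Icc (v := fun _ : ℝ => V)
      (s := fun _ : ℝ => (Set.univ : Set (X × Y))) (fun _ _ => hVlip.lipschitzOnWith)
      (f := fun τ => z τ z₁) (g := fun τ => z τ z₂) hmem
      hz1c.continuousOn (fun r _ => hode z₁ r) (fun _ _ => trivial)
      hz2c.continuousOn (fun r _ => hode z₂ r) (fun _ _ => trivial) hz_eq
    have h0mem : (0 : ℝ) ∈ Set.Icc (min t 0 - 1) (max t 0 + 1) :=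
      ⟨by have := min_le_right t 0; linarith, by have := le_max_right t 0; linarith⟩
    have h00 : z 0 z₁ = z 0 z₂ := heq h0mem
    rw [hz0, hz0] at h00
    exact hne h00
  -- weak cone invariance
  have inv : ∀ s t : ℝ, s ≤ t → ‖u s‖ ≤ ‖v s‖ → ‖u t‖ ≤ ‖v t‖ := by
    intro s t₁ hst hsuv
    by_contra hcon
    push_neg at hcon
    have hs_lt : s < t₁ := by
      rcases eq_or_lt_of_le hst with h | h
      · exfalso; rw [h] at hsuv; linarith
      · exact h
    set T : Set ℝ := Set.Icc s t₁ ∩ {r | ‖u r‖ ≤ ‖v r‖} with hT_def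
    have hT_closed : IsClosed T := isClosed_Icc.inter (isClosed_le hu_c.norm hv_c.norm)
    have hT_ne : T.Nonempty := ⟨s, ⟨le_refl s, hst⟩, hsuv⟩
    have hT_bdd : BddAbove T := ⟨t₁, fun r hr => hr.1.2⟩
    set t₂ : ℝ := sSup T with ht₂_def
    have ht₂T : t₂ ∈ T := hT_closed.csSup_mem hT_ne hT_bdd
    obtain ⟨⟨ht₂s, ht₂t₁⟩, huv₂⟩ := ht₂T
    simp only [Set.mem_setOf_eq] at huv₂
    have ht₂lt : t₂ < t₁ := lt_of_le_of_ne ht₂t₁ (by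
      intro h; rw [h] at huv₂; linarith)
    have hgtr : ∀ r : ℝ, t₂ < r → r ≤ t₁ → ‖v r‖ < ‖u r‖ := by
      intro r h1 h2
      by_contra hh; push_neg at hh
      have : r ≤ t₂ := le_csSup hT_bdd ⟨⟨le_trans ht₂s h1.le, h2⟩, hh⟩
      linarith
    have hvu₂ : ‖v t₂‖ ≤ ‖u t₂‖ := by
      have hev : ∀ᶠ r in nhdsWithin t₂ (Set.Ioi t₂), ‖v r‖ - ‖u r‖ ≤ 0 := by
        filter_upwards [Ioo_mem_nhdsGT ht₂lt] with r hr
        linarith [hgtr r hr.1 hr.2.le]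
      have htend : Filter.Tendsto (fun r => ‖v r‖ - ‖u r‖) (nhdsWithin t₂ (Set.Ioi t₂))
          (nhds (‖v t₂‖ - ‖u t₂‖)) :=
        ((hv_c.norm.sub hu_c.norm).tendsto t₂).mono_left nhdsWithin_le_nhds
      linarith [le_of_tendsto htend hev]
    have hm_u : ∀ r : ℝ, r ∈ Set.Icc t₂ t₁ → m r = ‖u r‖ := by
      intro r hr
      rcases eq_or_lt_of_le hr.1 with h | h
      · rw [← h]; exact max_eq_left hvu₂
      · exact max_eq_left (hgtr r h hr.2).le
    have hψc : Continuous fun r : ℝ => Real.exp (-(α * r)) * ‖u r‖ :=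
      (Real.continuous_exp.comp (by fun_prop)).mul hu_c.norm
    have hψI : ∀ x ∈ Set.Icc t₂ t₁, Real.exp (-(α * x)) * ‖u x‖
        ≤ Real.exp (-(α * t₂)) * ‖u t₂‖ + δ * ∫ r in t₂..x, Real.exp (-(α * r)) * ‖u r‖ := by
      intro x hx
      have hA1 := estA t₂ x hx.1
      have hmul := mul_le_mul_of_nonneg_left hA1 (Real.exp_pos (-(α * x))).le
      rw [mul_add] at hmul
      have e1 : Real.exp (-(α * x)) * (Real.exp (α * (x - t₂)) * ‖u t₂‖)
          = Real.exp (-(α * t₂)) * ‖u t₂‖ := by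
        rw [← mul_assoc, ← Real.exp_add, show -(α * x) + α * (x - t₂) = -(α * t₂) by ring]
      have e2 : Real.exp (-(α * x)) * ∫ r in t₂..x, Real.exp (α * (x - r)) * (δ * m r)
          = δ * ∫ r in t₂..x, Real.exp (-(α * r)) * ‖u r‖ := by
        rw [← intervalIntegral.integral_const_mul, ← intervalIntegral.integral_const_mul]
        apply intervalIntegral.integral_congr
        intro r hr
        rw [Set.uIcc_of_le hx.1] at hr
        have hmr : m r = ‖u r‖ := hm_u r ⟨hr.1, le_trans hr.2 hx.2⟩
        simp only [hmr]
        rw [← mul_assoc, ← Real.exp_add, show -(α * x) + α * (x - r) = -(α * r) by ring]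
        ring
      rw [e1, e2] at hmul
      exact hmul
    have hψb := my_gronwall_integral hδ hψc hψI
    have hu_ub : ∀ x ∈ Set.Icc t₂ t₁, ‖u x‖ ≤ ‖u t₂‖ * Real.exp ((α + δ) * (x - t₂)) := by
      intro x hx
      have h1 := hψb x hx
      have h2 := mul_le_mul_of_nonneg_left h1 (Real.exp_pos (α * x)).le
      rw [← mul_assoc, ← Real.exp_add, show α * x + -(α * x) = 0 by ring, Real.exp_zero,
        one_mul] at h2
      calc ‖u x‖ ≤ Real.exp (α * x) * (Real.exp (-(α * t₂)) * ‖u t₂‖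
              * Real.exp (δ * (x - t₂))) := h2
        _ = ‖u t₂‖ * Real.exp ((α + δ) * (x - t₂)) := by
            rw [show Real.exp (α*x) * (Real.exp (-(α*t₂)) * ‖u t₂‖ * Real.exp (δ*(x-t₂)))
              = (Real.exp (α*x) * Real.exp (-(α*t₂)) * Real.exp (δ*(x-t₂))) * ‖u t₂‖ by ring,
              ← Real.exp_add, ← Real.exp_add,
              show α*x + -(α*t₂) + δ*(x-t₂) = (α+δ)*(x-t₂) by ring]
            ring
    -- lower bound for ‖v t₁‖
    have hB1 := estB t₂ t₁ ht₂t₁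
    have hmulB := mul_le_mul_of_nonneg_left hB1 (Real.exp_pos (β * (t₁ - t₂))).le
    rw [mul_add, ← mul_assoc, ← Real.exp_add,
      show β * (t₁ - t₂) + -(β * (t₁ - t₂)) = 0 by ring, Real.exp_zero, one_mul] at hmulB
    have e3 : Real.exp (β*(t₁-t₂)) * ∫ ρ in t₂..t₁, Real.exp (-(β*(ρ-t₂))) * (δ * m ρ)
        = ∫ ρ in t₂..t₁, Real.exp (β*(t₁-ρ)) * (δ * m ρ) := by
      rw [← intervalIntegral.integral_const_mul]
      apply intervalIntegral.integral_congr
      intro ρ hρ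
      show Real.exp (β*(t₁-t₂)) * (Real.exp (-(β*(ρ-t₂))) * (δ * m ρ))
        = Real.exp (β*(t₁-ρ)) * (δ * m ρ)
      rw [← mul_assoc, ← Real.exp_add, show β*(t₁-t₂) + -(β*(ρ-t₂)) = β*(t₁-ρ) by ring]
    rw [e3] at hmulB
    have hIb : (∫ ρ in t₂..t₁, Real.exp (β * (t₁ - ρ)) * (δ * m ρ))
        ≤ δ * ‖u t₂‖ * Real.exp (β * (t₁ - t₂))
          * ((1 - Real.exp (-(γ * (t₁ - t₂)))) / γ) := by
      have hmono : (∫ ρ in t₂..t₁, Real.exp (β * (t₁ - ρ)) * (δ * m ρ))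
          ≤ ∫ ρ in t₂..t₁, (δ * ‖u t₂‖ * Real.exp (β * (t₁ - t₂)))
            * Real.exp (-(γ * (ρ - t₂))) := by
        have hg1 : Continuous fun ρ : ℝ => Real.exp (β * (t₁ - ρ)) * (δ * m ρ) :=
          (Real.continuous_exp.comp (by fun_prop)).mul hφc
        have hg2 : Continuous fun ρ : ℝ => (δ * ‖u t₂‖ * Real.exp (β * (t₁ - t₂)))
            * Real.exp (-(γ * (ρ - t₂))) :=
          continuous_const.mul (Real.continuous_exp.comp (by fun_prop))
        apply intervalIntegral.integral_mono_on ht₂t₁ (hg1.intervalIntegrable _ _)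
          (hg2.intervalIntegrable _ _)
        intro ρ hρ
        have hmr : m ρ = ‖u ρ‖ := hm_u ρ hρ
        have hub := hu_ub ρ hρ
        have hexpid : Real.exp (β * (t₁ - ρ)) * Real.exp ((α + δ) * (ρ - t₂))
            = Real.exp (β * (t₁ - t₂)) * Real.exp (-(γ * (ρ - t₂))) := by
          rw [← Real.exp_add, ← Real.exp_add]
          congr 1
          rw [hγ_def]; ring
        rw [hmr]
        calc Real.exp (β * (t₁ - ρ)) * (δ * ‖u ρ‖)
            ≤ Real.exp (β * (t₁ - ρ)) * (δ * (‖u t₂‖ * Real.exp ((α + δ) * (ρ - t₂)))) :=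
              mul_le_mul_of_nonneg_left (mul_le_mul_of_nonneg_left hub hδ)
                (Real.exp_pos (β * (t₁ - ρ))).le
          _ = (δ * ‖u t₂‖ * Real.exp (β * (t₁ - t₂))) * Real.exp (-(γ * (ρ - t₂))) := by
              rw [show Real.exp (β*(t₁-ρ)) * (δ * (‖u t₂‖ * Real.exp ((α+δ)*(ρ-t₂))))
                = (δ * ‖u t₂‖) * (Real.exp (β*(t₁-ρ)) * Real.exp ((α+δ)*(ρ-t₂))) by ring,
                hexpid]
              ring
      rwa [intervalIntegral.integral_const_mul, my_int2 (ne_of_gt hγ0) t₂ t₁] at hmono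
    -- final contradiction
    have hnn : (0:ℝ) ≤ ‖u t₂‖ := norm_nonneg _
    have hEle : Real.exp (-(γ * (t₁ - t₂))) ≤ 1 := by
      rw [← Real.exp_zero]
      exact Real.exp_le_exp.mpr (by nlinarith)
    have hJnn : (0:ℝ) ≤ (1 - Real.exp (-(γ * (t₁ - t₂)))) / γ :=
      div_nonneg (by linarith) hγ0.le
    have hJ : γ * ((1 - Real.exp (-(γ * (t₁ - t₂)))) / γ)
        = 1 - Real.exp (-(γ * (t₁ - t₂))) := by field_simp
    have hq1 : δ * ((1 - Real.exp (-(γ * (t₁ - t₂)))) / γ)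
        ≤ 1 - Real.exp (-(γ * (t₁ - t₂))) := by
      nlinarith [mul_le_mul_of_nonneg_right hγδ.le hJnn]
    have hu1 := hu_ub t₁ ⟨ht₂t₁, le_refl t₁⟩
    have e4 : Real.exp ((α + δ) * (t₁ - t₂))
        = Real.exp (β * (t₁ - t₂)) * Real.exp (-(γ * (t₁ - t₂))) := by
      rw [← Real.exp_add]
      congr 1
      rw [hγ_def]; ring
    rw [e4] at hu1
    have hvv₂ := mul_le_mul_of_nonneg_left huv₂ (Real.exp_pos (β * (t₁ - t₂))).le
    have hint : (0:ℝ) ≤ ‖u t₂‖ * Real.exp (β * (t₁ - t₂))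
        * (1 - Real.exp (-(γ * (t₁ - t₂)))
          - δ * ((1 - Real.exp (-(γ * (t₁ - t₂)))) / γ)) := by
      apply mul_nonneg (mul_nonneg hnn (Real.exp_pos _).le)
      linarith
    nlinarith [hmulB, hIb, hu1, hvv₂, hint, hcon]
  have strict : ∀ s t : ℝ, s < t → ‖u s‖ ≤ ‖v s‖ → ‖u t‖ < ‖v t‖ := by
    intro s t hst hsuv
    have hvall : ∀ r : ℝ, s ≤ r → ‖u r‖ ≤ ‖v r‖ := fun r hr => inv s r hr hsuv
    have hm_v : ∀ r : ℝ, s ≤ r → m r = ‖v r‖ := fun r hr => max_eq_right (hvall r hr)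
    have hχc : Continuous fun ρ : ℝ => Real.exp (-(β * ρ)) * ‖v ρ‖ :=
      (Real.continuous_exp.comp (by fun_prop)).mul hv_c.norm
    have hχI : ∀ r ∈ Set.Icc s t, Real.exp (-(β * r)) * ‖v r‖
        ≤ Real.exp (-(β * t)) * ‖v t‖ + δ * ∫ ρ in r..t, Real.exp (-(β * ρ)) * ‖v ρ‖ := by
      intro r hr
      have hB1 := estB r t hr.2
      have hmul := mul_le_mul_of_nonneg_left hB1 (Real.exp_pos (-(β * r))).le
      rw [mul_add] at hmul
      have e1 : Real.exp (-(β*r)) * (Real.exp (-(β*(t-r))) * ‖v t‖)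
          = Real.exp (-(β*t)) * ‖v t‖ := by
        rw [← mul_assoc, ← Real.exp_add, show -(β*r) + -(β*(t-r)) = -(β*t) by ring]
      have e2 : Real.exp (-(β*r)) * ∫ ρ in r..t, Real.exp (-(β*(ρ-r))) * (δ * m ρ)
          = δ * ∫ ρ in r..t, Real.exp (-(β*ρ)) * ‖v ρ‖ := by
        rw [← intervalIntegral.integral_const_mul, ← intervalIntegral.integral_const_mul]
        apply intervalIntegral.integral_congr
        intro ρ hρ
        rw [Set.uIcc_of_le hr.2] at hρ
        show Real.exp (-(β*r)) * (Real.exp (-(β*(ρ-r))) * (δ * m ρ))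
          = δ * (Real.exp (-(β*ρ)) * ‖v ρ‖)
        rw [hm_v ρ (le_trans hr.1 hρ.1), ← mul_assoc, ← Real.exp_add,
          show -(β*r) + -(β*(ρ-r)) = -(β*ρ) by ring]
        ring
      rw [e1, e2] at hmul
      exact hmul
    have hχb := my_gronwall_integral_back hδ hχc hχI
    have hv_ub : ∀ r ∈ Set.Icc s t, ‖v r‖ ≤ ‖v t‖ * Real.exp (-((β - δ) * (t - r))) := by
      intro r hr
      have h1 := hχb r hr
      have h2 := mul_le_mul_of_nonneg_left h1 (Real.exp_pos (β * r)).le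
      rw [← mul_assoc, ← Real.exp_add, show β*r + -(β*r) = 0 by ring, Real.exp_zero,
        one_mul] at h2
      calc ‖v r‖ ≤ Real.exp (β*r) * (Real.exp (-(β*t)) * ‖v t‖ * Real.exp (δ*(t-r))) := h2
        _ = ‖v t‖ * Real.exp (-((β-δ)*(t-r))) := by
          rw [show Real.exp (β*r) * (Real.exp (-(β*t)) * ‖v t‖ * Real.exp (δ*(t-r)))
            = (Real.exp (β*r) * Real.exp (-(β*t)) * Real.exp (δ*(t-r))) * ‖v t‖ by ring,
            ← Real.exp_add, ← Real.exp_add,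
            show β*r + -(β*t) + δ*(t-r) = -((β-δ)*(t-r)) by ring]
          ring
    have hA1 := estA s t hst.le
    have hIb : (∫ r in s..t, Real.exp (α*(t-r)) * (δ * m r))
        ≤ (δ * ‖v t‖) * ((1 - Real.exp (-(γ*(t-s))))/γ) := by
      have hmono : (∫ r in s..t, Real.exp (α*(t-r)) * (δ * m r))
          ≤ ∫ r in s..t, (δ * ‖v t‖) * Real.exp (-(γ*(t-r))) := by
        have hg1 : Continuous fun r : ℝ => Real.exp (α*(t-r)) * (δ * m r) :=
          (Real.continuous_exp.comp (by fun_prop)).mul hφc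
        have hg2 : Continuous fun r : ℝ => (δ * ‖v t‖) * Real.exp (-(γ*(t-r))) :=
          continuous_const.mul (Real.continuous_exp.comp (by fun_prop))
        apply intervalIntegral.integral_mono_on hst.le (hg1.intervalIntegrable _ _)
          (hg2.intervalIntegrable _ _)
        intro r hr
        rw [hm_v r hr.1]
        have hub := hv_ub r hr
        have hexpid : Real.exp (α*(t-r)) * Real.exp (-((β-δ)*(t-r)))
            = Real.exp (-(γ*(t-r))) := by
          rw [← Real.exp_add]
          congr 1
          rw [hγ_def]; ring
        calc Real.exp (α*(t-r)) * (δ * ‖v r‖)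
            ≤ Real.exp (α*(t-r)) * (δ * (‖v t‖ * Real.exp (-((β-δ)*(t-r))))) :=
              mul_le_mul_of_nonneg_left (mul_le_mul_of_nonneg_left hub hδ)
                (Real.exp_pos (α*(t-r))).le
          _ = (δ * ‖v t‖) * Real.exp (-(γ*(t-r))) := by
              rw [show Real.exp (α*(t-r)) * (δ * (‖v t‖ * Real.exp (-((β-δ)*(t-r)))))
                = (δ * ‖v t‖) * (Real.exp (α*(t-r)) * Real.exp (-((β-δ)*(t-r)))) by ring,
                hexpid]
      rwa [intervalIntegral.integral_const_mul, my_int1 (ne_of_gt hγ0) s t] at hmono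
    have hvs : ‖v s‖ ≤ ‖v t‖ * Real.exp (-((β-δ)*(t-s))) :=
      hv_ub s ⟨le_refl s, hst.le⟩
    have husvs : ‖u s‖ ≤ ‖v t‖ * Real.exp (-((β-δ)*(t-s))) := le_trans hsuv hvs
    have hvt_pos : (0:ℝ) < ‖v t‖ := by
      have h1 := hm_pos t
      rwa [hm_v t hst.le] at h1
    have hE : Real.exp (-(γ*(t-s))) < 1 := by
      rw [← Real.exp_zero]
      exact Real.exp_lt_exp.mpr (by nlinarith)
    have hfirst : Real.exp (α*(t-s)) * ‖u s‖ ≤ ‖v t‖ * Real.exp (-(γ*(t-s))) := by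
      have h2 := mul_le_mul_of_nonneg_left husvs (Real.exp_pos (α*(t-s))).le
      calc Real.exp (α*(t-s)) * ‖u s‖
          ≤ Real.exp (α*(t-s)) * (‖v t‖ * Real.exp (-((β-δ)*(t-s)))) := h2
        _ = ‖v t‖ * Real.exp (-(γ*(t-s))) := by
          rw [show Real.exp (α*(t-s)) * (‖v t‖ * Real.exp (-((β-δ)*(t-s))))
            = ‖v t‖ * (Real.exp (α*(t-s)) * Real.exp (-((β-δ)*(t-s)))) by ring,
            ← Real.exp_add]
          congr 2
          rw [hγ_def]; ring
    have hJ : γ * ((1 - Real.exp (-(γ*(t-s))))/γ) = 1 - Real.exp (-(γ*(t-s))) := by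
      field_simp
    have hJpos : (0:ℝ) < (1 - Real.exp (-(γ*(t-s))))/γ := div_pos (by linarith) hγ0
    have hδJ : δ * ((1 - Real.exp (-(γ*(t-s))))/γ) < 1 - Real.exp (-(γ*(t-s))) := by
      nlinarith [mul_lt_mul_of_pos_right hγδ hJpos]
    nlinarith [hA1, hIb, hfirst, mul_lt_mul_of_pos_left
      (show Real.exp (-(γ*(t-s))) + δ * ((1 - Real.exp (-(γ*(t-s))))/γ) < 1 by linarith)
      hvt_pos]
  by_cases h1 : ∀ t : ℝ, ‖v t‖ < ‖u t‖
  · exact Or.inl h1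
  · push_neg at h1
    obtain ⟨s₀, hs₀⟩ := h1
    by_cases h2 : ∃ r : ℝ, ‖v r‖ < ‖u r‖
    · obtain ⟨r₀, hr₀⟩ := h2
      set S : Set ℝ := {t | ‖u t‖ ≤ ‖v t‖} with hS_def
      have hS_ne : S.Nonempty := ⟨s₀, hs₀⟩
      have hS_bdd : BddBelow S := by
        refine ⟨r₀, fun x hx => ?_⟩
        by_contra hh
        push_neg at hh
        linarith [strict x r₀ hh hx]
      set t₀ : ℝ := sInf S with ht₀_def
      have hlt : ∀ t : ℝ, t < t₀ → ‖v t‖ < ‖u t‖ := by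
        intro t ht
        by_contra hh
        push_neg at hh
        exact absurd (csInf_le hS_bdd hh) (not_le.mpr ht)
      have hgt : ∀ t : ℝ, t₀ < t → ‖u t‖ < ‖v t‖ := by
        intro t ht
        obtain ⟨x, hxS, hxt⟩ := exists_lt_of_csInf_lt hS_ne ht
        exact strict x t hxt hxS
      have heq0 : ‖v t₀‖ = ‖u t₀‖ := by
        have hle1 : ‖u t₀‖ ≤ ‖v t₀‖ := by
          have hev : ∀ᶠ r in nhdsWithin t₀ (Set.Ioi t₀), ‖u r‖ - ‖v r‖ ≤ 0 := by
            filter_upwards [self_mem_nhdsWithin] with r hr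
            linarith [hgt r hr]
          have htend : Filter.Tendsto (fun r => ‖u r‖ - ‖v r‖) (nhdsWithin t₀ (Set.Ioi t₀))
              (nhds (‖u t₀‖ - ‖v t₀‖)) :=
            ((hu_c.norm.sub hv_c.norm).tendsto t₀).mono_left nhdsWithin_le_nhds
          linarith [le_of_tendsto htend hev]
        have hle2 : ‖v t₀‖ ≤ ‖u t₀‖ := by
          have hev : ∀ᶠ r in nhdsWithin t₀ (Set.Iio t₀), ‖v r‖ - ‖u r‖ ≤ 0 := by
            filter_upwards [self_mem_nhdsWithin] with r hr
            linarith [hlt r hr]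
          have htend : Filter.Tendsto (fun r => ‖v r‖ - ‖u r‖) (nhdsWithin t₀ (Set.Iio t₀))
              (nhds (‖v t₀‖ - ‖u t₀‖)) :=
            ((hv_c.norm.sub hu_c.norm).tendsto t₀).mono_left nhdsWithin_le_nhds
          linarith [le_of_tendsto htend hev]
        linarith
      exact Or.inr (Or.inr ⟨t₀, hlt, heq0, hgt⟩)
    · push_neg at h2
      exact Or.inr (Or.inl fun t => strict (t - 1) t (by linarith) (h2 (t - 1)))
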